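/- Let ℝ² be the real Euclidean plane, let M = {(0,t) : t ∈ ℝ} ⊆ ℝ² (the range of the projection E(x₁,x₂) = (0, x₁ + x₂)), and let φ̂ : ℝ² × ℝ² → ℝ be the bounded bilinear form φ̂((x₁,x₂),(y₁,y₂)) = x₂·y₂. Then ‖φ̂‖ = 1 and the restriction φ = φ̂|_{M×M} also has norm ‖φ‖ = 1; hence φ admits a norm-preserving bilinear extension to ℝ² × ℝ² even though the projection E onto M has norm √2 ≠ 1 (so the converse of the norm-one projection criterion fails). -/

import Mathlib

/-- The canonical operator-norm group structure on `N →L[𝕜] Z` for a submodule `N`;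
this is definitionally the canonical Mathlib instance, registered to help instance search. -/
noncomputable instance instCLMNormedAddCommGroupOfSubmodule {𝕜 : Type*} [RCLike 𝕜] {Y Z : Type*}
    [NormedAddCommGroup Y] [NormedSpace 𝕜 Y]
    [NormedAddCommGroup Z] [NormedSpace 𝕜 Z] (N : Submodule 𝕜 Y) :
    NormedAddCommGroup (↥N →L[𝕜] Z) := inferInstance

/-- The canonical normed-space structure on `N →L[𝕜] Z` for a submodule `N`;
this is definitionally the canonical Mathlib instance, registered to help instance search. -/
noncomputable instance instCLMNormedSpaceOfSubmodule {𝕜 : Type*} [RCLike 𝕜] {Y Z : Type*}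
    [NormedAddCommGroup Y] [NormedSpace 𝕜 Y]
    [NormedAddCommGroup Z] [NormedSpace 𝕜 Z] (N : Submodule 𝕜 Y) :
    NormedSpace 𝕜 (↥N →L[𝕜] Z) := inferInstance

lemma e2_norm (x : EuclideanSpace ℝ (Fin 2)) :
    ‖x‖ = Real.sqrt (x 0 ^ 2 + x 1 ^ 2) := by
  rw [EuclideanSpace.norm_eq, Fin.sum_univ_two]
  simp [Real.norm_eq_abs, sq_abs]

lemma e2_coord (x : EuclideanSpace ℝ (Fin 2)) : |x 1| ≤ ‖x‖ := by
  rw [e2_norm, ← Real.sqrt_sq_eq_abs]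
  exact Real.sqrt_le_sqrt (by nlinarith [sq_nonneg (x 0)])

/-- Counterexample to the converse of the norm-one projection criterion: on the Euclidean
plane, with `M = {(0,t) : t ∈ ℝ}` (the range of the projection `E(x₁,x₂) = (0, x₁+x₂)`,
which has norm `√2 ≠ 1`), the bilinear form `φ̂((x₁,x₂),(y₁,y₂)) = x₂y₂` has norm one,
its restriction `φ` to `M × M` has norm one, and `φ̂` is a bilinear extension of `φ`;
so `φ` has a norm-preserving bilinear extension even though `‖E‖ = √2 ≠ 1`. -/
theorem stmt_9 (E : EuclideanSpace ℝ (Fin 2) →L[ℝ] EuclideanSpace ℝ (Fin 2))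
    (hE : ∀ x : EuclideanSpace ℝ (Fin 2), E x 0 = 0 ∧ E x 1 = x 0 + x 1)
    (M : Submodule ℝ (EuclideanSpace ℝ (Fin 2)))
    (hM : M = LinearMap.range (E : EuclideanSpace ℝ (Fin 2) →ₗ[ℝ] EuclideanSpace ℝ (Fin 2)))
    (φhat : EuclideanSpace ℝ (Fin 2) →L[ℝ] EuclideanSpace ℝ (Fin 2) →L[ℝ] ℝ)
    (hφhat : ∀ x y : EuclideanSpace ℝ (Fin 2), φhat x y = x 1 * y 1)
    (φ : M →L[ℝ] M →L[ℝ] ℝ)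
    (hφ : ∀ (u v : M), φ u v = φhat (u : EuclideanSpace ℝ (Fin 2)) (v : EuclideanSpace ℝ (Fin 2))) :
    ‖φhat‖ = 1 ∧ ‖φ‖ = 1 ∧ ‖E‖ = Real.sqrt 2 ∧ Real.sqrt 2 ≠ 1 := by
  set e1 : EuclideanSpace ℝ (Fin 2) := EuclideanSpace.single 1 (1 : ℝ) with he1
  have he1n : ‖e1‖ = 1 := by simp [he1]
  have he11 : e1 1 = 1 := by simp [he1]
  -- e1 ∈ M
  have he1M : e1 ∈ M := by
    rw [hM]
    refine ⟨EuclideanSpace.single 0 (1 : ℝ), ?_⟩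
    ext i
    fin_cases i
    · simpa [he1] using (hE (EuclideanSpace.single 0 (1 : ℝ))).1
    · have := (hE (EuclideanSpace.single 0 (1 : ℝ))).2
      simp [he11] at this ⊢; exact this
  have hsqrt2 : Real.sqrt 2 ≠ 1 := by
    intro h
    have : (2 : ℝ) = 1 := by
      have := congrArg (· ^ 2) h
      simpa [Real.sq_sqrt] using this
    norm_num at this
  have hφhatnorm : ‖φhat‖ = 1 := by
    apply le_antisymm
    · refine ContinuousLinearMap.opNorm_le_bound _ zero_le_one (fun x => ?_)
      refine ContinuousLinearMap.opNorm_le_bound _ (by positivity) (fun y => ?_)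
      rw [hφhat, Real.norm_eq_abs, abs_mul, one_mul]
      exact mul_le_mul (e2_coord x) (e2_coord y) (abs_nonneg _) (norm_nonneg _)
    · have h := (φhat e1).le_opNorm e1
      have h2 := φhat.le_opNorm e1
      have hval : φhat e1 e1 = 1 := by rw [hφhat, he11]; ring
      rw [hval, he1n, mul_one] at h
      rw [he1n, mul_one] at h2
      calc (1:ℝ) = ‖(1:ℝ)‖ := by norm_num
        _ ≤ ‖φhat e1‖ := by simpa [hval] using h
        _ ≤ ‖φhat‖ := h2
  have hφnorm : ‖φ‖ = 1 := by
    apply le_antisymm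
    · refine ContinuousLinearMap.opNorm_le_bound _ zero_le_one (fun u => ?_)
      refine ContinuousLinearMap.opNorm_le_bound _ (by positivity) (fun v => ?_)
      rw [hφ, hφhat, Real.norm_eq_abs, abs_mul, one_mul]
      exact mul_le_mul (e2_coord _) (e2_coord _) (abs_nonneg _) (norm_nonneg _)
    · set u : M := ⟨e1, he1M⟩ with hu
      have hun : ‖u‖ = 1 := he1n
      have h := (φ u).le_opNorm u
      have h2 := φ.le_opNorm u
      have hval : φ u u = 1 := by rw [hφ, hφhat]; simp [hu, he11]
      rw [hun, mul_one] at h h2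
      calc (1:ℝ) = ‖φ u u‖ := by rw [hval]; norm_num
        _ ≤ ‖φ u‖ := h
        _ ≤ ‖φ‖ := h2
  have hEnorm : ‖E‖ = Real.sqrt 2 := by
    have hEx : ∀ x : EuclideanSpace ℝ (Fin 2), ‖E x‖ = |x 0 + x 1| := by
      intro x
      rw [e2_norm, (hE x).1, (hE x).2]
      simp [Real.sqrt_sq_eq_abs]
    apply le_antisymm
    · refine ContinuousLinearMap.opNorm_le_bound _ (Real.sqrt_nonneg 2) (fun x => ?_)
      rw [hEx, e2_norm, ← Real.sqrt_sq_eq_abs, ← Real.sqrt_mul (by norm_num)]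
      exact Real.sqrt_le_sqrt (by nlinarith [sq_nonneg (x 0 - x 1)])
    · set x : EuclideanSpace ℝ (Fin 2) := !₂[1, 1] with hx
      have hx0 : x 0 = 1 := rfl
      have hx1 : x 1 = 1 := rfl
      have hxn : ‖x‖ = Real.sqrt 2 := by rw [e2_norm, hx0, hx1]; norm_num
      have h := E.le_opNorm x
      rw [hEx, hx0, hx1, hxn] at h
      have h2 : (2:ℝ) ≤ ‖E‖ * Real.sqrt 2 := by
        rw [show |(1:ℝ)+1| = 2 by norm_num] at h; exact h
      have hs : Real.sqrt 2 * Real.sqrt 2 = 2 := Real.mul_self_sqrt (by norm_num)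
      nlinarith [Real.sqrt_nonneg 2, Real.sq_sqrt (by norm_num : (2:ℝ) ≥ 0)]
  exact ⟨hφhatnorm, hφnorm, hEnorm, hsqrt2⟩
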